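/- Let T = (L, R, τ) be a rewrite rule (without cloning) and m : L → G a graph morphism whose underlying function on nodes is injective. Then a heterogeneous pushout of T and m exists, i.e. the category of heterogeneous cones over T and m has an initial object. -/

import Mathlib

/-!
Termgraphs over a signature `Ω` with arity function `ar`.
A termgraph has a type of nodes `N`; a node `n` is *labeled* when `label n = some ω`,
and then its successor string `succ n` has length `ar ω`; unlabeled nodes have an
empty successor string (the successor function is only meaningful on labeled nodes).
-/

universe u

structure TermGraph (Ω : Type u) (ar : Ω → ℕ) : Type (u + 1) where
  N : Type u
  label : N → Option Ω
  succ : N → List N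
  arity_eq : ∀ n : N, (succ n).length = ((label n).map ar).getD 0

namespace TermGraph

variable {Ω : Type u} {ar : Ω → ℕ}

/-- A graph morphism: preserves labeled nodes, labels and successors. -/
structure Hom (G H : TermGraph Ω ar) : Type u where
  toFun : G.N → H.N
  label_eq : ∀ (n : G.N) (ω : Ω), G.label n = some ω → H.label (toFun n) = some ω
  succ_eq : ∀ (n : G.N) (ω : Ω), G.label n = some ω →
    H.succ (toFun n) = (G.succ n).map toFun

/-- `γ` is graphic at `n`: either `n` is unlabeled, or both `n` and `γ n` are labeled
with the same label and corresponding successors. -/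
def GraphicAt (G H : TermGraph Ω ar) (γ : G.N → H.N) (n : G.N) : Prop :=
  ∀ ω : Ω, G.label n = some ω →
    H.label (γ n) = some ω ∧ H.succ (γ n) = (G.succ n).map γ

/-- `γ` is strictly graphic at `n`: either both `n` and `γ n` are unlabeled, or both
are labeled with the same label and corresponding successors.  (When both are
unlabeled both successor strings are empty, so the successor condition is harmless.) -/
def StrictGraphicAt (G H : TermGraph Ω ar) (γ : G.N → H.N) (n : G.N) : Prop :=
  H.label (γ n) = G.label n ∧ H.succ (γ n) = (G.succ n).map γ

def GraphicOn (G H : TermGraph Ω ar) (γ : G.N → H.N) (Γ : Set G.N) : Prop :=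
  ∀ n ∈ Γ, GraphicAt G H γ n

def StrictGraphicOn (G H : TermGraph Ω ar) (γ : G.N → H.N) (Γ : Set G.N) : Prop :=
  ∀ n ∈ Γ, StrictGraphicAt G H γ n

/-- `p ∈ |H|` is a `τ`-clone of `q ∈ |G|` (for `τ : |G| → |H|`): `p` is labeled iff
`q` is labeled, and then they carry the same label and `𝓢_H p = τ*(𝓢_G q)`. -/
def IsClone (G H : TermGraph Ω ar) (τ : G.N → H.N) (p : H.N) (q : G.N) : Prop :=
  H.label p = G.label q ∧ H.succ p = (G.succ q).map τ

end TermGraph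

open TermGraph

/-- `(H, τ₁, d)` is a heterogeneous cone over the rewrite rule (without cloning)
`(L, R, τ)` and the graph morphism `m : L → G`: `|d| ∘ τ = τ₁ ∘ |m|` and `τ₁` is
graphic on `|G| − |m(L)|`. -/
def IsHetCone {Ω : Type u} {ar : Ω → ℕ} (L R G : TermGraph Ω ar)
    (τ : L.N → R.N) (m : Hom L G)
    (H : TermGraph Ω ar) (τ₁ : G.N → H.N) (d : Hom R H) : Prop :=
  d.toFun ∘ τ = τ₁ ∘ m.toFun ∧ GraphicOn G H τ₁ ((Set.range m.toFun)ᶜ)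

/-- `h` is a morphism of heterogeneous cones from `(H, τ₁, d)` to `(H', τ₁', d')`. -/
def IsHetConeMorphism {Ω : Type u} {ar : Ω → ℕ} {R G H H' : TermGraph Ω ar}
    (τ₁ : G.N → H.N) (d : Hom R H) (τ₁' : G.N → H'.N) (d' : Hom R H')
    (h : Hom H H') : Prop :=
  h.toFun ∘ τ₁ = τ₁' ∧ h.toFun ∘ d.toFun = d'.toFun


section PushoutConstruction

variable {Ω : Type u} {ar : Ω → ℕ}

theorem Hom.ext' {G H : TermGraph Ω ar} {f g : Hom G H}
    (h : f.toFun = g.toFun) : f = g := by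
  cases f; cases g; cases h; rfl

open Classical in
/-- The function `τ₁` of the pushout construction. -/
noncomputable def pushTau (L R G : TermGraph Ω ar) (τ : L.N → R.N) (m : Hom L G)
    (g : G.N) : R.N ⊕ {n : G.N // n ∉ Set.range m.toFun} :=
  if h : g ∈ Set.range m.toFun then Sum.inl (τ h.choose) else Sum.inr ⟨g, h⟩

theorem pushTau_of_mem (L R G : TermGraph Ω ar) (τ : L.N → R.N) (m : Hom L G)
    (hm : Function.Injective m.toFun) (l : L.N) :
    pushTau L R G τ m (m.toFun l) = Sum.inl (τ l) := by
  have h : m.toFun l ∈ Set.range m.toFun := ⟨l, rfl⟩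
  have := h.choose_spec
  unfold pushTau
  rw [dif_pos h, hm this]

theorem pushTau_of_not_mem (L R G : TermGraph Ω ar) (τ : L.N → R.N) (m : Hom L G)
    (g : G.N) (h : g ∉ Set.range m.toFun) :
    pushTau L R G τ m g = Sum.inr ⟨g, h⟩ := by
  unfold pushTau; exact dif_neg h

/-- The pushout graph. -/
noncomputable def pushGraph (L R G : TermGraph Ω ar) (τ : L.N → R.N) (m : Hom L G) :
    TermGraph Ω ar where
  N := R.N ⊕ {n : G.N // n ∉ Set.range m.toFun}
  label x := match x with
    | .inl r => R.label r
    | .inr g => G.label g.1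
  succ x := match x with
    | .inl r => (R.succ r).map Sum.inl
    | .inr g => (G.succ g.1).map (pushTau L R G τ m)
  arity_eq := by
    rintro (r | g)
    · simpa using R.arity_eq r
    · simpa using G.arity_eq g.1

end PushoutConstruction

/-- Existence of the heterogeneous pushout of a rewrite rule without cloning
`T = (L, R, τ)` and a matching `m : L → G` (a graph morphism injective on nodes):
the category of heterogeneous cones over `T` and `m` has an initial object. -/
theorem het_pushout_exists {Ω : Type u} {ar : Ω → ℕ} (L R G : TermGraph Ω ar)
    (τ : L.N → R.N) (m : Hom L G) (hm : Function.Injective m.toFun) :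
    ∃ (H : TermGraph Ω ar) (τ₁ : G.N → H.N) (d : Hom R H),
      IsHetCone L R G τ m H τ₁ d ∧
      ∀ (H' : TermGraph Ω ar) (τ₁' : G.N → H'.N) (d' : Hom R H'),
        IsHetCone L R G τ m H' τ₁' d' →
        ∃! h : Hom H H', IsHetConeMorphism τ₁ d τ₁' d' h := by
  classical
  set H := pushGraph L R G τ m with hH
  set τ₁ := pushTau L R G τ m with hτ₁
  have hmem : ∀ l : L.N, τ₁ (m.toFun l) = Sum.inl (τ l) :=
    pushTau_of_mem L R G τ m hm
  have hnot : ∀ (g : G.N) (h : g ∉ Set.range m.toFun), τ₁ g = Sum.inr ⟨g, h⟩ :=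
    pushTau_of_not_mem L R G τ m
  let dHom : Hom R H :=
    { toFun := Sum.inl
      label_eq := fun n ω h => h
      succ_eq := fun n ω h => rfl }
  refine ⟨H, τ₁, dHom, ⟨?_, ?_⟩, ?_⟩
  · funext l
    exact (hmem l).symm
  · intro g hg ω hω
    rw [hnot g hg]
    exact ⟨hω, rfl⟩
  · intro H' τ₁' d' ⟨hc1, hc2⟩
    -- define the mediating morphism
    let f : H.N → H'.N := fun x => match x with
      | .inl r => d'.toFun r
      | .inr g => τ₁' g.1
    have hfτ : ∀ g : G.N, f (τ₁ g) = τ₁' g := by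
      intro g
      by_cases h : g ∈ Set.range m.toFun
      · obtain ⟨l, rfl⟩ := h
        rw [hmem l]
        show d'.toFun (τ l) = _
        exact congrFun hc1 l
      · rw [hnot g h]
    let fHom : Hom H H' :=
      { toFun := f
        label_eq := by
          rintro (r | g) ω hω
          · exact d'.label_eq r ω hω
          · exact (hc2 g.1 g.2 ω hω).1
        succ_eq := by
          rintro (r | g) ω hω
          · show H'.succ (d'.toFun r) = ((R.succ r).map Sum.inl).map f
            rw [d'.succ_eq r ω hω]; erw [List.map_map]
            rfl
          · show H'.succ (τ₁' g.1) = ((G.succ g.1).map τ₁).map f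
            rw [(hc2 g.1 g.2 ω hω).2]; erw [List.map_map]
            exact List.map_congr_left fun x _ => (hfτ x).symm }
    refine ⟨fHom, ⟨funext hfτ, rfl⟩, ?_⟩
    rintro h' ⟨h1, h2⟩
    apply Hom.ext'
    funext x
    rcases x with r | g
    · exact congrFun h2 r
    · have := congrFun h1 g.1
      change h'.toFun (τ₁ g.1) = τ₁' g.1 at this
      rw [hnot g.1 g.2] at this
      exact this
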